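/- arXiv:1606.09480 — 4 statements merged into one kernel-verified Lean document; each statement's English description precedes it below -/
import Mathlib

section
/- Let Ñ be a k×k real matrix such that every row and every column of Ñ has exactly two nonzero entries, arranged cyclically: for each ℓ ∈ {1,…,k}, row ℓ is nonzero exactly in columns ℓ-1 and ℓ (indices mod k). If there exists v ∈ ℝ^k with all entries nonzero and Ñv = 0, then there exists a nonzero vector ω ∈ ℝ^k with ωᵀÑ = 0, and every entry of ω is nonzero. -/
/-- If the `k × k` matrix `Ñ` has cyclic nonzero pattern (row `ℓ` is nonzero
exactly in columns `ℓ - 1` and `ℓ`, indices mod `k`) and there is `v` with all entries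
nonzero and `Ñ v = 0`, then there is a nonzero left-kernel vector `ω` all of whose
entries are nonzero. -/
theorem stmt2 {k : ℕ} [NeZero k] (hk : 2 ≤ k) (N : Matrix (Fin k) (Fin k) ℝ)
    (hpat : ∀ ℓ c : Fin k, N ℓ c ≠ 0 ↔ (c = ℓ - 1 ∨ c = ℓ))
    (v : Fin k → ℝ) (hvne : ∀ i, v i ≠ 0) (hv : N.mulVec v = 0) :
    ∃ ω : Fin k → ℝ, ω ≠ 0 ∧ Matrix.vecMul ω N = 0 ∧ ∀ i, ω i ≠ 0 := by
  have h1 : (1 : Fin k) ≠ 0 := by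
    intro h
    have := congrArg Fin.val h
    simp [Fin.val_one, Nat.mod_eq_of_lt (by omega : 1 < k)] at this
  have hsub : ∀ ℓ : Fin k, ℓ - 1 ≠ ℓ := by
    intro ℓ h
    exact h1 (sub_eq_self.mp h)
  have hNd : ∀ ℓ : Fin k, N ℓ (ℓ - 1) ≠ 0 := fun ℓ => (hpat ℓ (ℓ - 1)).mpr (Or.inl rfl)
  have hNdiag : ∀ ℓ : Fin k, N ℓ ℓ ≠ 0 := fun ℓ => (hpat ℓ ℓ).mpr (Or.inr rfl)
  -- row equations from N v = 0
  have hrow : ∀ ℓ : Fin k, N ℓ (ℓ - 1) * v (ℓ - 1) + N ℓ ℓ * v ℓ = 0 := by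
    intro ℓ
    have h0 := congrFun hv ℓ
    rw [Matrix.mulVec, dotProduct] at h0
    have hsum : ∑ j, N ℓ j * v j = N ℓ (ℓ - 1) * v (ℓ - 1) + N ℓ ℓ * v ℓ := by
      refine Finset.sum_eq_add_of_mem (ℓ - 1) ℓ (Finset.mem_univ _) (Finset.mem_univ _)
        (hsub ℓ) ?_
      intro j _ hj
      have hz : N ℓ j = 0 := by
        by_contra hne
        rcases (hpat ℓ j).mp hne with h | h
        · exact hj.1 h
        · exact hj.2 h
      simp [hz]
    rw [hsum] at h0
    simpa using h0
  refine ⟨fun c => 1 / (v (c - 1) * N c (c - 1)), ?_, ?_, ?_⟩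
  · intro h
    have := congrFun h 0
    simp only [one_div, Pi.zero_apply, inv_eq_zero, mul_eq_zero] at this
    rcases this with h | h
    · exact hvne _ h
    · exact hNd _ h
  · funext c
    rw [Matrix.vecMul, dotProduct]
    have hsum : ∑ ℓ, (1 / (v (ℓ - 1) * N ℓ (ℓ - 1))) * N ℓ c
        = (1 / (v (c - 1) * N c (c - 1))) * N c c
          + (1 / (v ((c + 1) - 1) * N (c + 1) ((c + 1) - 1))) * N (c + 1) c := by
      refine Finset.sum_eq_add_of_mem c (c + 1) (Finset.mem_univ _) (Finset.mem_univ _)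
        ?_ ?_
      · simpa using hsub (c + 1)
      · intro ℓ _ hℓ
        have hz : N ℓ c = 0 := by
          by_contra hne
          rcases (hpat ℓ c).mp hne with h | h
          · exact hℓ.2 (by rw [h]; exact (sub_add_cancel ℓ 1).symm)
          · exact hℓ.1 h.symm
        simp [hz]
    rw [hsum]
    have hcc : (c + 1) - 1 = c := add_sub_cancel_right c 1
    rw [hcc]
    have hr := hrow c
    have hv1 : v (c - 1) ≠ 0 := hvne _
    have hv2 : v c ≠ 0 := hvne _
    have hn1 : N c (c - 1) ≠ 0 := hNd c
    have hn2 : N (c + 1) c ≠ 0 := by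
      have := hNd (c + 1); rwa [hcc] at this
    simp only [Pi.zero_apply]
    field_simp
    linear_combination hr
  · intro i
    simp only [one_div, ne_eq, inv_eq_zero, mul_eq_zero, not_or]
    exact ⟨hvne _, hNd _⟩
end

section
/- Let Ñ be a k×k real matrix such that row ℓ is nonzero exactly in columns ℓ-1 and ℓ (indices mod k), and suppose for every column j of Ñ the two nonzero entries have opposite signs. Then any nonzero ω ∈ ℝ^k with ωᵀÑ = 0 has all entries of the same (nonzero) sign; in particular ω can be chosen with all entries positive. -/
/-- If the `k × k` matrix `Ñ` has cyclic nonzero pattern (row `ℓ` is nonzero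
exactly in columns `ℓ - 1` and `ℓ`, indices mod `k`) and in every column the two nonzero
entries (in rows `j` and `j + 1`) have opposite signs, then every nonzero left-kernel
vector `ω` has all entries of the same nonzero sign; in particular it can be chosen with
all entries positive. -/
theorem stmt3 {k : ℕ} [NeZero k] (hk : 2 ≤ k) (N : Matrix (Fin k) (Fin k) ℝ)
    (hpat : ∀ ℓ c : Fin k, N ℓ c ≠ 0 ↔ (c = ℓ - 1 ∨ c = ℓ))
    (hcol : ∀ j : Fin k, N j j * N (j + 1) j < 0)
    (ω : Fin k → ℝ) (hω : ω ≠ 0) (hker : Matrix.vecMul ω N = 0) :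
    ((∀ i, 0 < ω i) ∨ (∀ i, ω i < 0)) ∧
      ∃ ω' : Fin k → ℝ, Matrix.vecMul ω' N = 0 ∧ ∀ i, 0 < ω' i := by
  have h1 : (1 : Fin k) ≠ 0 := by
    intro h
    have := congrArg Fin.val h
    rw [Fin.val_one'] at this
    simp at this
    omega
  have hne : ∀ j : Fin k, j ≠ j + 1 := by
    intro j h
    exact h1 (left_eq_add.mp h)
  have key : ∀ j : Fin k, ω j * N j j + ω (j + 1) * N (j + 1) j = 0 := by
    intro j
    have h0 := congrFun hker j
    simp only [Matrix.vecMul, dotProduct, Pi.zero_apply] at h0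
    have hsum : ∑ ℓ, ω ℓ * N ℓ j = ω j * N j j + ω (j + 1) * N (j + 1) j := by
      rw [← Finset.sum_subset (Finset.subset_univ ({j, j + 1} : Finset (Fin k)))]
      · rw [Finset.sum_pair (hne j)]
      · intro x _ hx
        simp only [Finset.mem_insert, Finset.mem_singleton, not_or] at hx
        have hNx : N x j = 0 := by
          by_contra hN
          rcases (hpat x j).mp hN with h | h
          · exact hx.2 (sub_eq_iff_eq_add.mp h.symm)
          · exact hx.1 h.symm
        simp [hNx]
    rw [hsum] at h0
    exact h0
  have hNd : ∀ j : Fin k, N (j + 1) j ≠ 0 := by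
    intro j h
    have := hcol j
    rw [h] at this
    simp at this
  have hc : ∀ j : Fin k, 0 < -N j j / N (j + 1) j := by
    intro j
    have hb := hNd j
    have heq : -N j j / N (j + 1) j = (-(N j j * N (j + 1) j)) / (N (j + 1) j * N (j + 1) j) := by
      field_simp
    rw [heq]
    apply div_pos (by linarith [hcol j])
    exact mul_self_pos.mpr hb
  have step : ∀ j : Fin k, ω (j + 1) = (-N j j / N (j + 1) j) * ω j := by
    intro j
    have hb := hNd j
    field_simp
    linear_combination key j
  open Fin.NatCast in
  have prop : ∀ n : ℕ, (0 < ω 0 → 0 < ω (n : Fin k)) ∧ (ω 0 < 0 → ω (n : Fin k) < 0) ∧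
      (ω 0 = 0 → ω (n : Fin k) = 0) := by
    intro n
    induction n with
    | zero => simp
    | succ n ih =>
      have hcast : ((n + 1 : ℕ) : Fin k) = (n : Fin k) + 1 := by push_cast; ring
      rw [hcast, step (n : Fin k)]
      refine ⟨fun h => mul_pos (hc _) (ih.1 h),
        fun h => mul_neg_of_pos_of_neg (hc _) (ih.2.1 h),
        fun h => by rw [ih.2.2 h, mul_zero]⟩
  have propAll : ∀ i : Fin k, (0 < ω 0 → 0 < ω i) ∧ (ω 0 < 0 → ω i < 0) ∧
      (ω 0 = 0 → ω i = 0) := by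
    intro i
    have := prop i.val
    rwa [Fin.cast_val_eq_self] at this
  have h0ne : ω 0 ≠ 0 := by
    intro h
    apply hω
    funext i
    exact (propAll i).2.2 h
  rcases lt_trichotomy (ω 0) 0 with hneg | hz | hpos
  · refine ⟨Or.inr fun i => (propAll i).2.1 hneg, -ω, ?_, fun i => ?_⟩
    · rw [Matrix.neg_vecMul, hker, neg_zero]
    · simpa using (propAll i).2.1 hneg
  · exact absurd hz h0ne
  · exact ⟨Or.inl fun i => (propAll i).1 hpos, ω, hker, fun i => (propAll i).1 hpos⟩
end

section
/- Let N be the (n+1+p)×(m+1) block matrix N = [[N*_c, −α, α′]; [0, 1, −1]; [0, −γ, γ]] where N*_c is n×(m−1), α, α′ ∈ ℝ^n, γ ∈ ℝ^p, and let N* = [N*_c, α′−α] be n×m. Then ker N = {(v_1,…,v_{m−1}, v_m, v_m) ∈ ℝ^{m+1} : (v_1,…,v_m) ∈ ker N*}. -/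
/-- Kernel of the block matrix arising from the removal of an intermediate.
Rows are indexed by `Fin n ⊕ (Unit ⊕ Fin p)` (non-intermediate species, the intermediate
`Y`, the cancelled catalysts) and columns of `N` by `Fin q ⊕ Bool` (the `m - 1 = q`
untouched reactions followed by the two reactions `y → Y` and `Y → y'`); columns of the
reduced matrix `N*` are indexed by `Fin q ⊕ Unit`.  Then `ker N` consists exactly of the
vectors obtained from elements of `ker N*` by duplicating the last coordinate. -/
theorem stmt8 {n p q : ℕ}
    (Nc : Matrix (Fin n) (Fin q) ℝ) (α α' : Fin n → ℝ) (γ : Fin p → ℝ)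
    (N : Matrix (Fin n ⊕ (Unit ⊕ Fin p)) (Fin q ⊕ Bool) ℝ)
    (Nstar : Matrix (Fin n) (Fin q ⊕ Unit) ℝ)
    (hN : ∀ i j, N (Sum.inl i) (Sum.inl j) = Nc i j)
    (hNα : ∀ i, N (Sum.inl i) (Sum.inr false) = -α i)
    (hNα' : ∀ i, N (Sum.inl i) (Sum.inr true) = α' i)
    (hY0 : ∀ j, N (Sum.inr (Sum.inl ())) (Sum.inl j) = 0)
    (hYf : N (Sum.inr (Sum.inl ())) (Sum.inr false) = 1)
    (hYt : N (Sum.inr (Sum.inl ())) (Sum.inr true) = -1)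
    (hE0 : ∀ e j, N (Sum.inr (Sum.inr e)) (Sum.inl j) = 0)
    (hEf : ∀ e, N (Sum.inr (Sum.inr e)) (Sum.inr false) = -γ e)
    (hEt : ∀ e, N (Sum.inr (Sum.inr e)) (Sum.inr true) = γ e)
    (hNs : ∀ i j, Nstar i (Sum.inl j) = Nc i j)
    (hNsl : ∀ i, Nstar i (Sum.inr ()) = α' i - α i) :
    ∀ w : Fin q ⊕ Bool → ℝ,
      N.mulVec w = 0 ↔
        ∃ v : Fin q ⊕ Unit → ℝ, Nstar.mulVec v = 0 ∧
          w = Sum.elim (fun j => v (Sum.inl j)) (fun _ => v (Sum.inr ())) := by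
  intro w
  constructor
  · intro h
    have hw : w (Sum.inr false) = w (Sum.inr true) := by
      have hY := congr_fun h (Sum.inr (Sum.inl ()))
      simp [Matrix.mulVec, dotProduct, Fintype.sum_sum_type, hY0, hYf, hYt] at hY
      linarith
    refine ⟨Sum.elim (fun j => w (Sum.inl j)) (fun _ => w (Sum.inr true)), ?_, ?_⟩
    · funext i
      have hi := congr_fun h (Sum.inl i)
      simp [Matrix.mulVec, dotProduct, Fintype.sum_sum_type, hN, hNα, hNα',
        hNs, hNsl, hw] at hi ⊢
      linarith
    · funext x
      cases x with
      | inl j => simp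
      | inr b => cases b <;> simp [hw]
  · rintro ⟨v, hv, rfl⟩
    funext r
    cases r with
    | inl i =>
      have hi := congr_fun hv i
      simp [Matrix.mulVec, dotProduct, Fintype.sum_sum_type, hN, hNα, hNα',
        hNs, hNsl] at hi ⊢
      linarith
    | inr s =>
      cases s with
      | inl u =>
        simp [Matrix.mulVec, dotProduct, Fintype.sum_sum_type, hY0, hYf, hYt]
      | inr e =>
        simp [Matrix.mulVec, dotProduct, Fintype.sum_sum_type, hE0, hEf, hEt]
end

section
/- Let D be a finite directed graph whose vertex set is partitioned into S-vertices and R-vertices, such that for every edge (u,v) with v an S-vertex, the reverse edge (v,u) may or may not exist, but every edge between an S-vertex and an R-vertex exists in at least the direction into the S-vertex whenever they are adjacent in the underlying undirected graph. If every edge (R, S) whose reverse (S, R) is absent lies on a directed simple cycle of D, and the underlying undirected graph of D is connected, then for any two R-vertices R, R' there is a directed path in D from R to R'. -/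
/-- Let `E` be a directed graph on a vertex set partitioned into R-vertices
(`isR`) and S-vertices (`¬ isR`), bipartite in the sense that every edge joins the two
classes.  Assume that whenever an R-vertex and an S-vertex are adjacent in the underlying
undirected graph, the edge directed into the S-vertex is present; assume that every
one-way edge `(r, s)` (i.e. with `(s, r)` absent) lies on a directed (simple) cycle,
which is equivalent to `r` being reachable from `s`; and assume the underlying
undirected graph is connected.  Then any R-vertex is reachable from any other by a
directed path. -/
theorem stmt14 {V : Type*} [Fintype V] (E : V → V → Prop) (isR : V → Prop)
    (hbip : ∀ u v, E u v → (isR u ↔ ¬ isR v))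
    (hRtoS : ∀ r s, isR r → ¬ isR s → (E r s ∨ E s r) → E r s)
    (hcyc : ∀ r s, isR r → ¬ isR s → E r s → ¬ E s r → Relation.ReflTransGen E s r)
    (hconn : ∀ u v : V, Relation.ReflTransGen (fun a b => E a b ∨ E b a) u v) :
    ∀ r r' : V, isR r → isR r' → Relation.ReflTransGen E r r' := by
  classical
  have key : ∀ u v : V, (E u v ∨ E v u) → Relation.ReflTransGen E u v := by
    intro u v h
    by_cases hu : isR u
    · have hv : ¬ isR v := by
        rcases h with h | h
        · exact (hbip u v h).mp hu
        · intro hv; exact ((hbip v u h).mp hv) hu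
      exact Relation.ReflTransGen.single (hRtoS u v hu hv h)
    · have hv : isR v := by
        rcases h with h | h
        · by_contra hv; exact hu (((hbip u v h).mpr hv))
        · exact (hbip v u h).mpr hu
      have hvu : E v u := hRtoS v u hv hu (Or.symm h)
      by_cases huv : E u v
      · exact Relation.ReflTransGen.single huv
      · exact hcyc v u hv hu hvu huv
  intro r r' hr hr'
  clear hr hr'
  induction hconn r r' with
  | refl => exact Relation.ReflTransGen.refl
  | tail h e ih => exact ih.trans (key _ _ e)
end
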